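/- For fixed y ∈ [0,1], the function x ↦ G₋(x,y) is convex on [0,1], where G₋(x,y) = 0 for x ≤ 1−y and G₋(x,y) = x + (1−2x)(1−y) − 2√(x(1−x)y(1−y)) for x > 1−y. -/
import Mathlib

noncomputable def gMinus (x y : ℝ) : ℝ := x + (1 - 2*x)*(1 - y) - 2*Real.sqrt (x*(1 - x)*y*(1 - y))
noncomputable def GMinus (x y : ℝ) : ℝ := if x > 1 - y then gMinus x y else 0

section aux
open Set Real

/-- congruence for ConvexOn -/
lemma myConvexOn_congr {s : Set ℝ} {f f' : ℝ → ℝ} (h : ConvexOn ℝ s f)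
    (he : ∀ x ∈ s, f x = f' x) : ConvexOn ℝ s f' :=
  ⟨h.1, fun x hx z hz a b ha hb hab => by
    rw [← he _ (h.1 hx hz ha hb hab), ← he _ hx, ← he _ hz]
    exact h.2 hx hz ha hb hab⟩

lemma myComp_max {c : ℝ} (hc : c ∈ Icc (0:ℝ) 1) {g : ℝ → ℝ}
    (hg : ConvexOn ℝ (Icc c 1) g) (hm : MonotoneOn g (Icc c 1)) :
    ConvexOn ℝ (Icc (0:ℝ) 1) (fun x => g (max x c)) := by
  refine ⟨convex_Icc _ _, fun x hx z hz a b ha hb hab => ?_⟩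
  simp only [smul_eq_mul]
  have hfx : max x c ∈ Icc c 1 := ⟨le_max_right _ _, max_le hx.2 hc.2⟩
  have hfz : max z c ∈ Icc c 1 := ⟨le_max_right _ _, max_le hz.2 hc.2⟩
  have hcomb : a * max x c + b * max z c ∈ Icc c 1 := by
    have := (convex_Icc c 1) hfx hfz ha hb hab
    simpa using this
  have hmem : max (a * x + b * z) c ∈ Icc c 1 := by
    refine ⟨le_max_right _ _, max_le ?_ hc.2⟩
    nlinarith [hx.2, hz.2]
  have h1 : max (a * x + b * z) c ≤ a * max x c + b * max z c := by
    refine max_le ?_ ?_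
    · have := le_max_left x c; have := le_max_left z c; nlinarith
    · calc c = a * c + b * c := by linear_combination (-c) * hab
        _ ≤ a * max x c + b * max z c := by
          have := le_max_right x c; have := le_max_right z c; nlinarith
  calc g (max (a * x + b * z) c) ≤ g (a * max x c + b * max z c) := hm hmem hcomb h1
    _ ≤ a * g (max x c) + b * g (max z c) := by
        have := hg.2 hfx hfz ha hb hab
        simpa using this

lemma concaveOn_mul_one_sub : ConcaveOn ℝ (Icc (0:ℝ) 1) (fun x : ℝ => x * (1 - x)) := by
  refine ⟨convex_Icc _ _, fun x hx z hz a b ha hb hab => ?_⟩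
  simp only [smul_eq_mul]
  have key : (a*x+b*z)*(1-(a*x+b*z)) - (a*(x*(1-x)) + b*(z*(1-z))) = a*b*(x-z)^2 := by
    linear_combination (-(a*x^2 + b*z^2)) * hab
  nlinarith [mul_nonneg (mul_nonneg ha hb) (sq_nonneg (x - z))]

lemma concaveOn_sqrt_mul : ConcaveOn ℝ (Icc (0:ℝ) 1) (fun x : ℝ => Real.sqrt (x * (1 - x))) := by
  refine ⟨convex_Icc _ _, fun x hx z hz a b ha hb hab => ?_⟩
  have hq := concaveOn_mul_one_sub.2 hx hz ha hb hab
  have hx0 : (0:ℝ) ≤ x * (1 - x) := mul_nonneg hx.1 (by linarith [hx.2])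
  have hz0 : (0:ℝ) ≤ z * (1 - z) := mul_nonneg hz.1 (by linarith [hz.2])
  have h1 := Real.strictConcaveOn_sqrt.concaveOn.2 (Set.mem_Ici.2 hx0) (Set.mem_Ici.2 hz0) ha hb hab
  simp only [smul_eq_mul] at *
  calc a * Real.sqrt (x*(1-x)) + b * Real.sqrt (z*(1-z))
      ≤ Real.sqrt (a * (x*(1-x)) + b * (z*(1-z))) := h1
    _ ≤ Real.sqrt ((a*x+b*z) * (1 - (a*x+b*z))) := Real.sqrt_le_sqrt hq

lemma gMinus_convex {y : ℝ} (hy : y ∈ Icc (0:ℝ) 1) :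
    ConvexOn ℝ (Icc (0:ℝ) 1) (fun x => gMinus x y) := by
  have hyy : (0:ℝ) ≤ y * (1 - y) := mul_nonneg hy.1 (by linarith [hy.2])
  have key : ∀ x ∈ Icc (0:ℝ) 1, gMinus x y
      = (x + (1 - 2*x)*(1 - y)) - (2 * Real.sqrt (y*(1-y))) * Real.sqrt (x * (1 - x)) := by
    intro x hx
    have : x*(1 - x)*y*(1 - y) = (y*(1-y)) * (x*(1-x)) := by ring
    rw [gMinus, this, Real.sqrt_mul hyy]
    ring
  have haff : ConvexOn ℝ (Icc (0:ℝ) 1) (fun x : ℝ => x + (1 - 2*x)*(1 - y)) := by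
    refine ⟨convex_Icc _ _, fun x hx z hz a b ha hb hab => ?_⟩
    simp only [smul_eq_mul]
    apply le_of_eq; linear_combination (y - 1) * hab
  have hcon : ConcaveOn ℝ (Icc (0:ℝ) 1)
      (fun x : ℝ => (2 * Real.sqrt (y*(1-y))) * Real.sqrt (x * (1 - x))) :=
    concaveOn_sqrt_mul.smul (by positivity)
  exact myConvexOn_congr (haff.sub hcon) (fun x hx => (key x hx).symm)

lemma gMinus_sq {x y : ℝ} (hx : x ∈ Icc (0:ℝ) 1) (hy : y ∈ Icc (0:ℝ) 1) :
    gMinus x y = (Real.sqrt (x*y) - Real.sqrt ((1-x)*(1-y)))^2 := by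
  have h1 : (0:ℝ) ≤ x * y := mul_nonneg hx.1 hy.1
  have h2 : (0:ℝ) ≤ (1-x)*(1-y) := mul_nonneg (by linarith [hx.2]) (by linarith [hy.2])
  have e1 : Real.sqrt (x*y) ^ 2 = x*y := Real.sq_sqrt h1
  have e2 : Real.sqrt ((1-x)*(1-y)) ^ 2 = (1-x)*(1-y) := Real.sq_sqrt h2
  have e3 : Real.sqrt (x*(1-x)*y*(1-y)) = Real.sqrt (x*y) * Real.sqrt ((1-x)*(1-y)) := by
    rw [← Real.sqrt_mul h1]; congr 1; ring
  rw [gMinus, sub_sq, e1, e2, e3]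
  ring

lemma gMinus_mono {y : ℝ} (hy : y ∈ Icc (0:ℝ) 1) :
    MonotoneOn (fun x => gMinus x y) (Icc (1-y) 1) := by
  intro x₁ hx₁ x₂ hx₂ h12
  have hx₁' : x₁ ∈ Icc (0:ℝ) 1 := ⟨by linarith [hx₁.1, hy.2], hx₁.2⟩
  have hx₂' : x₂ ∈ Icc (0:ℝ) 1 := ⟨by linarith [hx₂.1, hy.2], hx₂.2⟩
  simp only
  rw [gMinus_sq hx₁' hy, gMinus_sq hx₂' hy]
  set u₁ := Real.sqrt (x₁*y) - Real.sqrt ((1-x₁)*(1-y)) with hu₁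
  set u₂ := Real.sqrt (x₂*y) - Real.sqrt ((1-x₂)*(1-y)) with hu₂
  have hge : (1-x₁)*(1-y) ≤ x₁*y := by nlinarith [hx₁.1]
  have hu₁0 : 0 ≤ u₁ := sub_nonneg.2 (Real.sqrt_le_sqrt hge)
  have h12' : u₁ ≤ u₂ := by
    have a1 : Real.sqrt (x₁*y) ≤ Real.sqrt (x₂*y) :=
      Real.sqrt_le_sqrt (by nlinarith [hy.1])
    have a2 : Real.sqrt ((1-x₂)*(1-y)) ≤ Real.sqrt ((1-x₁)*(1-y)) :=
      Real.sqrt_le_sqrt (by nlinarith [hy.2])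
    simp only [hu₁, hu₂]; linarith
  exact pow_le_pow_left₀ hu₁0 h12' 2

lemma gMinus_at_edge {y : ℝ} (hy : y ∈ Icc (0:ℝ) 1) : gMinus (1-y) y = 0 := by
  have h : (1-y : ℝ) ∈ Icc (0:ℝ) 1 := ⟨by linarith [hy.2], by linarith [hy.1]⟩
  rw [gMinus_sq h hy]
  have : (1-y)*y = (1-(1-y))*(1-y) := by ring
  rw [this]
  ring

end aux

/-- For fixed `y ∈ [0,1]`, the map `x ↦ G₋(x,y)` is convex on `[0,1]`. -/
theorem stmt2 (y : ℝ) (hy : y ∈ Set.Icc (0:ℝ) 1) :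
    ConvexOn ℝ (Set.Icc (0:ℝ) 1) (fun x => GMinus x y) := by
  have hc : (1-y : ℝ) ∈ Set.Icc (0:ℝ) 1 := ⟨by linarith [hy.2], by linarith [hy.1]⟩
  have hg : ConvexOn ℝ (Set.Icc (1-y) 1) (fun x => gMinus x y) :=
    (gMinus_convex hy).subset (Set.Icc_subset_Icc_left hc.1) (convex_Icc _ _)
  have hcomp := myComp_max hc hg (gMinus_mono hy)
  refine myConvexOn_congr hcomp (fun x hx => ?_)
  by_cases h : x > 1 - y
  · rw [max_eq_left h.le]
    simp [GMinus, h]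
  · push_neg at h
    rw [max_eq_right h]
    simp [GMinus, not_lt.2 h, gMinus_at_edge hy]
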